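/- Let C be a finite set of candidates, PW = {pw_1,…,pw_l} ⊆ C a nonempty set of possible winners, and P a preference order on C with P(pw_a,pw_b) if and only if a < b. Let P' be a preference order on C such that P'(pw_a,pw_{a+1}) holds for all a ∈ {1,…,l−1} and |[pw_a, P', pw_{a+1}]| = |[pw_a, P, pw_{a+1}]| for all a ∈ {1,…,l−1}. Then for every possible world s for PW, the outcomes coincide: F(s,P') = F(s,P); in particular, P' does not locally dominate P (given PW). -/
import Mathlib


/-- A preference order: a strict total order on candidates. -/
def IsPref {C : Type*} (P : C → C → Prop) : Prop :=
  (∀ a b : C, a ≠ b → P a b ∨ P b a) ∧ (∀ a : C, ¬ P a a) ∧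
    ∀ a b c : C, P a b → P b c → P a c

/-- The Borda score that preference order `P` gives candidate `c`. -/
noncomputable def borda {C : Type*} [Fintype C] (P : C → C → Prop) (c : C) : ℕ :=
  1 + Set.ncard {c' : C | P c c'}

/-- `c` is the outcome `F(s, P)`: it beats every other candidate either in total score
`s + borda`, or on equal total score by the tie-breaking order `tb`. -/
def IsWinner {C : Type*} [Fintype C] (tb : C → C → Prop) (s : C → ℕ)
    (P : C → C → Prop) (c : C) : Prop :=
  ∀ c' : C, c' ≠ c →
    s c' + borda P c' < s c + borda P c ∨
      (s c' + borda P c' = s c + borda P c ∧ tb c c')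

/-- `s` is a possible world for the set `PW` of possible winners. -/
def PossibleWorld {C : Type*} [Fintype C] (tb : C → C → Prop) (PW : Set C)
    (s : C → ℕ) : Prop :=
  ∀ R : C → C → Prop, IsPref R → ∀ c : C, IsWinner tb s R c → c ∈ PW

/-- `P'` locally dominates `P` given the possible-winner set `PW`. -/
def LocDom {C : Type*} [Fintype C] (tb : C → C → Prop) (PW : Set C)
    (P' P : C → C → Prop) : Prop :=
  (∀ s : C → ℕ, PossibleWorld tb PW s →
      ∀ w' w : C, IsWinner tb s P' w' → IsWinner tb s P w → w' = w ∨ P w' w) ∧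
  ∃ s : C → ℕ, PossibleWorld tb PW s ∧
      ∃ w' w : C, IsWinner tb s P' w' ∧ IsWinner tb s P w ∧ P w' w

/-- The (closed) segment `[c, P, c']` of candidates between `c` and `c'`. -/
def seg {C : Type*} (P : C → C → Prop) (c c' : C) : Set C :=
  {d : C | (d = c ∨ P c d) ∧ (d = c' ∨ P d c')}

lemma seg_card {C : Type*} [Fintype C] (P : C → C → Prop) (hP : IsPref P)
    {c c' : C} (h : P c c') :
    borda P c' + (seg P c c').ncard = borda P c + 1 := by
  obtain ⟨htot, hirr, htrans⟩ := hP
  set A := {d : C | P c d ∧ (d = c' ∨ P d c')} with hAdef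
  set B := {d : C | P c' d} with hBdef
  have hseg : seg P c c' = insert c A := by
    ext d
    simp only [seg, Set.mem_setOf_eq, Set.mem_insert_iff, hAdef]
    constructor
    · rintro ⟨(rfl | h1), h2⟩
      · exact Or.inl rfl
      · exact Or.inr ⟨h1, h2⟩
    · rintro (rfl | ⟨h1, h2⟩)
      · exact ⟨Or.inl rfl, Or.inr h⟩
      · exact ⟨Or.inr h1, h2⟩
  have hcA : c ∉ A := fun hc => hirr c hc.1
  have hAB : {d : C | P c d} = A ∪ B := by
    ext d
    simp only [Set.mem_setOf_eq, Set.mem_union, hAdef, hBdef]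
    constructor
    · intro hd
      by_cases hdc : d = c'
      · exact Or.inl ⟨hd, Or.inl hdc⟩
      · rcases htot d c' hdc with h1 | h1
        · exact Or.inl ⟨hd, Or.inr h1⟩
        · exact Or.inr h1
    · rintro (⟨h1, -⟩ | h1)
      · exact h1
      · exact htrans c c' d h h1
  have hdisj : Disjoint A B := by
    rw [Set.disjoint_left]
    rintro d ⟨-, (rfl | h2)⟩ hB
    · exact hirr d hB
    · exact hirr d (htrans d c' d h2 hB)
  have h1 : (seg P c c').ncard = A.ncard + 1 := by
    rw [hseg, Set.ncard_insert_of_notMem hcA (Set.toFinite A)]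
  have h2 : ({d : C | P c d}).ncard = A.ncard + B.ncard := by
    rw [hAB, Set.ncard_union_eq hdisj (Set.toFinite A) (Set.toFinite B)]
  have h3 : borda P c' = 1 + B.ncard := rfl
  have h4 : borda P c = 1 + ({d : C | P c d}).ncard := rfl
  omega

lemma finset_max {α : Type*} [DecidableEq α] (f : α → α → Prop)
    (htot : ∀ x y, x ≠ y → f x y ∨ f y x)
    (htr : ∀ x y z, f x y → f y z → f x z) :
    ∀ t : Finset α, t.Nonempty → ∃ w ∈ t, ∀ c ∈ t, c ≠ w → f w c := by
  intro t
  induction t using Finset.induction_on with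
  | empty => intro h; simp at h
  | @insert a t ha ih =>
    intro _
    by_cases ht : t.Nonempty
    · obtain ⟨w, hw, hmax⟩ := ih ht
      have haw : a ≠ w := fun hh => ha (hh ▸ hw)
      rcases htot a w haw with hfa | hfw
      · refine ⟨a, Finset.mem_insert_self a t, ?_⟩
        intro c hc hcne
        rcases Finset.mem_insert.mp hc with rfl | hc
        · exact absurd rfl hcne
        · by_cases hcw : c = w
          · exact hcw ▸ hfa
          · exact htr a w c hfa (hmax c hc hcw)
      · refine ⟨w, Finset.mem_insert_of_mem hw, ?_⟩
        intro c hc hcne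
        rcases Finset.mem_insert.mp hc with rfl | hc
        · exact hfw
        · exact hmax c hc hcne
    · rw [Finset.not_nonempty_iff_eq_empty] at ht
      subst ht
      refine ⟨a, Finset.mem_insert_self a ∅, ?_⟩
      intro c hc hcne
      simp at hc
      exact absurd hc hcne

theorem statement3 {C : Type*} [Fintype C]
    (tb : C → C → Prop) (htb : IsPref tb)
    (l : ℕ) (hl : 0 < l) (pw : Fin l → C) (hinj : Function.Injective pw)
    (P P' : C → C → Prop) (hP : IsPref P) (hP' : IsPref P')
    (horder : ∀ a b : Fin l, P (pw a) (pw b) ↔ a < b)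
    (horder' : ∀ a : ℕ, ∀ h : a + 1 < l, P' (pw ⟨a, by omega⟩) (pw ⟨a + 1, h⟩))
    (hsize : ∀ a : ℕ, ∀ h : a + 1 < l,
      (seg P' (pw ⟨a, by omega⟩) (pw ⟨a + 1, h⟩)).ncard =
        (seg P (pw ⟨a, by omega⟩) (pw ⟨a + 1, h⟩)).ncard) :
    (∀ s : C → ℕ, PossibleWorld tb (Set.range pw) s →
        ∀ c : C, IsWinner tb s P' c ↔ IsWinner tb s P c) ∧
      ¬ LocDom tb (Set.range pw) P' P := by
  classical
  obtain ⟨htbtot, htbirr, htbtrans⟩ := htb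
  -- cross lemma for consecutive indices, then from 0
  have cross0 : ∀ (b : ℕ) (hb : b < l),
      borda P' (pw ⟨0, hl⟩) + borda P (pw ⟨b, hb⟩) =
        borda P (pw ⟨0, hl⟩) + borda P' (pw ⟨b, hb⟩) := by
    intro b
    induction b with
    | zero => intro hb; exact Nat.add_comm _ _
    | succ b ih =>
      intro hb
      have hb' : b < l := by omega
      have hPstep : P (pw ⟨b, hb'⟩) (pw ⟨b + 1, hb⟩) :=
        (horder ⟨b, hb'⟩ ⟨b + 1, hb⟩).mpr (by simp [Fin.lt_def])
      have hP'step : P' (pw ⟨b, hb'⟩) (pw ⟨b + 1, hb⟩) := horder' b hb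
      have e1 := seg_card P hP hPstep
      have e2 := seg_card P' hP' hP'step
      have e3 := hsize b hb
      have e4 := ih hb'
      omega
  have cross : ∀ a b : Fin l,
      borda P' (pw a) + borda P (pw b) = borda P (pw a) + borda P' (pw b) := by
    intro a b
    have h1 := cross0 a.1 a.2
    have h2 := cross0 b.1 b.2
    simp only [Fin.eta] at h1 h2
    omega
  have key : ∀ (Q Q' : C → C → Prop), IsPref Q → IsPref Q' →
      (∀ a b : Fin l, borda Q' (pw a) + borda Q (pw b) =
        borda Q (pw a) + borda Q' (pw b)) →
      ∀ s : C → ℕ, PossibleWorld tb (Set.range pw) s →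
      ∀ c : C, IsWinner tb s Q' c → IsWinner tb s Q c := by
    intro Q Q' hQ hQ' hcross s hs c hc
    set f : C → C → Prop := fun x y =>
      s y + borda Q y < s x + borda Q x ∨
        (s y + borda Q y = s x + borda Q x ∧ tb x y) with hfdef
    have ftot : ∀ x y, x ≠ y → f x y ∨ f y x := by
      intro x y hxy
      rcases Nat.lt_trichotomy (s x + borda Q x) (s y + borda Q y) with h | h | h
      · exact Or.inr (Or.inl h)
      · rcases htbtot x y hxy with ht | ht
        · exact Or.inl (Or.inr ⟨h.symm, ht⟩)
        · exact Or.inr (Or.inr ⟨h, ht⟩)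
      · exact Or.inl (Or.inl h)
    have ftr : ∀ x y z, f x y → f y z → f x z := by
      intro x y z h1 h2
      rcases h1 with h1 | ⟨h1, t1⟩ <;> rcases h2 with h2 | ⟨h2, t2⟩
      · exact Or.inl (by omega)
      · exact Or.inl (by omega)
      · exact Or.inl (by omega)
      · exact Or.inr ⟨by omega, htbtrans x y z t1 t2⟩
    have : Nonempty C := ⟨pw ⟨0, hl⟩⟩
    obtain ⟨w, -, hwmax⟩ := finset_max f ftot ftr Finset.univ Finset.univ_nonempty
    have hww : IsWinner tb s Q w := fun c' hc' => hwmax c' (Finset.mem_univ c') hc'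
    obtain ⟨a, ha⟩ := hs Q' hQ' c hc
    obtain ⟨b, hb⟩ := hs Q hQ w hww
    by_cases hcw : c = w
    · exact hcw ▸ hww
    · have hbeat' := hc w (fun hh => hcw hh.symm)
      have hcab := hcross a b
      rw [ha, hb] at hcab
      have hbeatQ : f c w := by
        rcases hbeat' with h | ⟨h, ht⟩
        · exact Or.inl (by omega)
        · exact Or.inr ⟨by omega, ht⟩
      intro c' hc'c
      by_cases hc'w : c' = w
      · exact hc'w ▸ hbeatQ
      · exact ftr c w c' hbeatQ (hww c' hc'w)
  have cross' : ∀ a b : Fin l,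
      borda P (pw a) + borda P' (pw b) = borda P' (pw a) + borda P (pw b) := by
    intro a b
    have := cross a b
    omega
  have hiff : ∀ s : C → ℕ, PossibleWorld tb (Set.range pw) s →
      ∀ c : C, IsWinner tb s P' c ↔ IsWinner tb s P c := by
    intro s hs c
    exact ⟨key P P' hP hP' cross s hs c, key P' P hP' hP cross' s hs c⟩
  refine ⟨hiff, ?_⟩
  rintro ⟨-, s, hs, w', w, hw', hw, hPw'w⟩
  have hw'' : IsWinner tb s P w' := (hiff s hs w').mp hw'
  have hwe : w' = w := by
    by_contra hne
    have h1 := hw'' w (fun hh => hne hh.symm)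
    have h2 := hw w' hne
    rcases h1 with h1 | ⟨h1, t1⟩ <;> rcases h2 with h2 | ⟨h2, t2⟩
    · omega
    · omega
    · omega
    · exact htbirr w' (htbtrans w' w w' t1 t2)
  subst hwe
  exact hP.2.1 w' hPw'w
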